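/- arXiv:1908.08598 — 7 statements merged into one kernel-verified Lean document; each statement's English description precedes it below -/
import Mathlib

section
/- For the function G(t,s) defined piecewise by G(t,s) = (1/6)(t³(1-s)² − (t−s)³) for 0 ≤ s ≤ t ≤ 1 and G(t,s) = (1/6)t³(1-s)² for 0 ≤ t ≤ s ≤ 1, we have G(t,s) ≥ 0 for all t, s ∈ [0,1]. -/
open Set intervalIntegral Filter

noncomputable def G (t s : ℝ) : ℝ :=
  if s ≤ t then (t^3*(1-s)^2 - (t-s)^3)/6 else t^3*(1-s)^2/6

noncomputable def e (s : ℝ) : ℝ := s*(1-s)^2/6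

noncomputable def H (α k : ℝ) {n : ℕ} (β η : Fin n → ℝ) (t s : ℝ) : ℝ :=
  G t s + (α/k) * (∫ τ in (0:ℝ)..1, G τ s) + (1/k) * ∑ i, β i * G (η i) s

theorem stmt0 : ∀ t ∈ Set.Icc (0:ℝ) 1, ∀ s ∈ Set.Icc (0:ℝ) 1, 0 ≤ G t s := by
  rintro t ⟨ht0, ht1⟩ s ⟨hs0, hs1⟩
  unfold G
  split_ifs with h
  · have h1 : (0:ℝ) ≤ t - s := sub_nonneg.2 h
    have h2 : t - s ≤ t * (1 - s) := by nlinarith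
    have h3 : (t-s)^3 ≤ (t*(1-s))^3 := pow_le_pow_left₀ h1 h2 3
    have h4 : (t*(1-s))^3 ≤ t^3*(1-s)^2 := by
      have : (t*(1-s))^3 = t^3*(1-s)^2*(1-s) := by ring
      rw [this]
      have hnn : (0:ℝ) ≤ t^3*(1-s)^2 := by positivity
      nlinarith [mul_le_of_le_one_right hnn (by linarith : (1:ℝ)-s ≤ 1)]
    linarith
  · positivity
end

section
/- For all (t,s) ∈ [0,1] × [0,1], the Green's function G satisfies G(t,s) ≤ e(s), where e(s) = (1/6)s(1−s)². -/
open Set intervalIntegral Filter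

theorem stmt1 : ∀ t ∈ Set.Icc (0:ℝ) 1, ∀ s ∈ Set.Icc (0:ℝ) 1, G t s ≤ e s := by
  rintro t ⟨ht0, ht1⟩ s ⟨hs0, hs1⟩
  unfold G e
  split_ifs with h
  · rcases eq_or_lt_of_le hs1 with hs | hs
    · have ht : t = 1 := le_antisymm ht1 (hs ▸ h)
      subst ht; rw [← hs]; norm_num
    · have hpos : (0:ℝ) < 1 - s := by linarith
      have hA : 0 ≤ s*(1-t)^2*(1-s)^2*(1+s) := by positivity
      have hB : 0 ≤ s*(2-s)*(t-s)*(1-t)^2*(1-s) := by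
        have h1 : (0:ℝ) ≤ 2 - s := by linarith
        have h2 : (0:ℝ) ≤ t - s := by linarith
        have h3 : (0:ℝ) ≤ 1 - s := by linarith
        positivity
      have key : (1-s)*(s*(1-s)^2 - t^3*(1-s)^2 + (t-s)^3)
          = s*(1-t)^2*(1-s)^2*(1+s) + s*(2-s)*(t-s)*(1-t)^2*(1-s) := by ring
      nlinarith [key, hA, hB, hpos]
  · push_neg at h
    have h3 : t^3 ≤ s := by nlinarith [sq_nonneg t]
    nlinarith [mul_nonneg (sub_nonneg.2 h3) (sq_nonneg (1-s))]
end

section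
/- For all (t,s) ∈ [0,1] × [0,1], the Green's function G satisfies G(t,s) ≥ ρ(t)·e(s), where e(s) = (1/6)s(1−s)² and ρ(t) = min{t³, t²(1−t)}. -/
open Set intervalIntegral Filter

theorem stmt2 : ∀ t ∈ Set.Icc (0:ℝ) 1, ∀ s ∈ Set.Icc (0:ℝ) 1,
    min (t^3) (t^2*(1-t)) * e s ≤ G t s := by
  intro t ht s hs
  obtain ⟨ht0, ht1⟩ := ht
  obtain ⟨hs0, hs1⟩ := hs
  have he : 0 ≤ e s := by
    unfold e; positivity
  unfold G
  split_ifs with h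
  · calc min (t^3) (t^2*(1-t)) * e s ≤ t^2*(1-t) * e s :=
          mul_le_mul_of_nonneg_right (min_le_right _ _) he
      _ ≤ (t^3*(1-s)^2 - (t-s)^3)/6 := by
          unfold e
          have hu : 0 ≤ t - s := sub_nonneg.2 h
          have ha : 0 ≤ 1 - t := sub_nonneg.2 ht1
          have key : t^3*(1-s)^2 - (t-s)^3 - t^2*(1-t)*(s*(1-s)^2) =
              2*s^1*(t-s)^2*(1-t)^3 + 5*s^1*(t-s)^3*(1-t)^2 + 4*s^1*(t-s)^4*(1-t)^1
              + s^1*(t-s)^5 + s^2*(t-s)^1*(1-t)^3 + 8*s^2*(t-s)^2*(1-t)^2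
              + 10*s^2*(t-s)^3*(1-t)^1 + 3*s^2*(t-s)^4 + 4*s^3*(t-s)^1*(1-t)^2
              + 8*s^3*(t-s)^2*(1-t)^1 + 3*s^3*(t-s)^3 + s^4*(1-t)^2
              + 2*s^4*(t-s)^1*(1-t)^1 + s^4*(t-s)^2 := by ring
          have hpos : 0 ≤ t^3*(1-s)^2 - (t-s)^3 - t^2*(1-t)*(s*(1-s)^2) := by
            rw [key]; positivity
          linarith
  · calc min (t^3) (t^2*(1-t)) * e s ≤ t^3 * e s :=
          mul_le_mul_of_nonneg_right (min_le_left _ _) he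
      _ ≤ t^3*(1-s)^2/6 := by
          unfold e
          nlinarith [pow_nonneg ht0 3, sq_nonneg (1-s), mul_nonneg (pow_nonneg ht0 3) (mul_nonneg (sq_nonneg (1-s)) (sub_nonneg.2 hs1))]
end

section
/- Let θ ∈ (0, 1/2). For all (t,s) ∈ [θ, 1−θ] × [0,1], the Green's function G satisfies θ³·e(s) ≤ G(t,s) ≤ e(s), where e(s) = (1/6)s(1−s)². -/
open Set intervalIntegral Filter

theorem stmt3 (θ : ℝ) (hθ : θ ∈ Set.Ioo (0:ℝ) (1/2)) :
    ∀ t ∈ Set.Icc θ (1-θ), ∀ s ∈ Set.Icc (0:ℝ) 1,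
      θ^3 * e s ≤ G t s ∧ G t s ≤ e s := by
  obtain ⟨hθ0, hθ2⟩ := hθ
  intro t ht s hs
  obtain ⟨hta, htb⟩ := ht
  obtain ⟨hs0, hs1⟩ := hs
  have ht0 : 0 < t := lt_of_lt_of_le hθ0 hta
  have ht1 : t ≤ 1 := by linarith
  unfold G e
  split_ifs with h
  · constructor
    · have h1 : (t*(1-s))^3 - (t-s)^3 ≥ 0 := by
        nlinarith [mul_nonneg (mul_nonneg hs0 (sub_nonneg.2 ht1))
          (by nlinarith : (t*(1-s))^2 + (t*(1-s))*(t-s) + (t-s)^2 ≥ 0)]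
      have h2 : θ^3 ≤ t^3 := pow_le_pow_left₀ hθ0.le hta 3
      nlinarith [mul_nonneg (mul_nonneg hs0 (sq_nonneg (1-s))) (sub_nonneg.2 h2),
        mul_nonneg hs0 (sq_nonneg (1-s)), sq_nonneg (1-s)]
    · nlinarith [mul_nonneg (mul_nonneg hs0 (sq_nonneg (1-t)))
        (by nlinarith : t*(2-s)+1-2*s ≥ 0)]
  · push_neg at h
    constructor
    · have h2 : θ^3 ≤ t^3 := pow_le_pow_left₀ hθ0.le hta 3
      have h3 : θ^3 * s ≤ t^3 := by
        nlinarith [mul_nonneg (sub_nonneg.2 hs1) (pow_pos hθ0 3).le]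
      nlinarith [mul_nonneg (sub_nonneg.2 h3) (sq_nonneg (1-s))]
    · have h4 : t^3 ≤ s := by nlinarith [mul_nonneg (mul_nonneg ht0.le (sub_nonneg.2 ht1)) (by linarith : (0:ℝ) ≤ 1+t)]
      nlinarith [mul_nonneg (sub_nonneg.2 h4) (sq_nonneg (1-s))]
end

section
/- Let y ∈ C([0,1], [0,∞)), α ≥ 0, βᵢ ≥ 0 with 0 < η₁ < ... < ηₙ < 1 and k := 1 − (α + Σᵢ βᵢ) > 0, and let u(t) = ∫₀¹ H(t,s) y(s) ds. Then for all t ∈ [0,1], u(t) ≤ ∫₀¹ ((1 + α/k) e(s) + (1/k)Σᵢ βᵢ G(ηᵢ,s)) y(s) ds, where e(s) = (1/6)s(1−s)². -/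
open Set intervalIntegral Filter

lemma G_cont : Continuous fun p : ℝ × ℝ => G p.1 p.2 := by
  unfold G
  apply Continuous.if_le (by fun_prop) (by fun_prop) continuous_snd continuous_fst
  intro p h
  rw [h]; ring

lemma G_le_e {t s : ℝ} (ht : t ∈ Set.Icc (0:ℝ) 1) (hs : s ∈ Set.Icc (0:ℝ) 1) :
    G t s ≤ e s := by
  obtain ⟨ht0, ht1⟩ := ht
  obtain ⟨hs0, hs1⟩ := hs
  unfold G e
  split_ifs with h
  · have key : s*(1-s)^2/6 - (t^3*(1-s)^2 - (t-s)^3)/6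
        = s*(1-t)^2*((1+t)*(1-s)+(t-s))/6 := by ring
    nlinarith [mul_nonneg (mul_nonneg hs0 (sq_nonneg (1-t)))
      (by nlinarith : (0:ℝ) ≤ (1+t)*(1-s)+(t-s))]
  · push_neg at h
    have ht3 : t^3 ≤ s := by nlinarith [mul_nonneg (mul_nonneg ht0 (by linarith : (0:ℝ) ≤ 1-t)) (by linarith : (0:ℝ) ≤ 1+t)]
    nlinarith [mul_nonneg (by linarith : (0:ℝ) ≤ s - t^3) (sq_nonneg (1-s))]

lemma intG_le_e {s : ℝ} (hs : s ∈ Set.Icc (0:ℝ) 1) :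
    (∫ τ in (0:ℝ)..1, G τ s) ≤ e s := by
  have hcont : Continuous fun τ => G τ s :=
    G_cont.comp (continuous_id.prodMk continuous_const)
  have h := intervalIntegral.integral_mono_on (μ := MeasureTheory.volume)
    zero_le_one (hcont.intervalIntegrable 0 1)
    (_root_.intervalIntegrable_const (c := e s))
    (fun τ hτ => G_le_e hτ hs)
  simpa using h

theorem stmt7 (n : ℕ) (α : ℝ) (β η : Fin n → ℝ)
    (hα : 0 ≤ α) (hβ : ∀ i, 0 ≤ β i)
    (hηmono : StrictMono η) (hη : ∀ i, η i ∈ Set.Ioo (0:ℝ) 1)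
    (k : ℝ) (hk : k = 1 - (α + ∑ i, β i)) (hk0 : 0 < k)
    (y : ℝ → ℝ) (hy : ContinuousOn y (Set.Icc 0 1))
    (hynn : ∀ t ∈ Set.Icc (0:ℝ) 1, 0 ≤ y t)
    (u : ℝ → ℝ) (hu : ∀ t, u t = ∫ s in (0:ℝ)..1, H α k β η t s * y s) :
    ∀ t ∈ Set.Icc (0:ℝ) 1,
      u t ≤ ∫ s in (0:ℝ)..1,
        ((1 + α/k) * e s + (1/k) * ∑ i, β i * G (η i) s) * y s := by
  intro t ht
  rw [hu]
  have huIcc : Set.uIcc (0:ℝ) 1 = Set.Icc 0 1 := Set.uIcc_of_le zero_le_one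
  have hGs : ∀ c : ℝ, Continuous fun s => G c s := fun c =>
    G_cont.comp (continuous_const.prodMk continuous_id)
  have hsum : Continuous fun s => ∑ i, β i * G (η i) s := by
    apply continuous_finset_sum
    exact fun i _ => continuous_const.mul (hGs (η i))
  have hint : Continuous fun s => ∫ τ in (0:ℝ)..1, G τ s := by
    have := intervalIntegral.continuous_parametric_intervalIntegral_of_continuous'
      (μ := MeasureTheory.volume) (f := fun s τ => G τ s)
      (by exact G_cont.comp (continuous_snd.prodMk continuous_fst)) 0 1
    exact this
  have hH : Continuous fun s => H α k β η t s := by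
    unfold H
    exact ((hGs t).add (continuous_const.mul hint)).add (continuous_const.mul hsum)
  have hRHS : Continuous fun s =>
      (1 + α/k) * e s + (1/k) * ∑ i, β i * G (η i) s := by
    have he : Continuous e := by unfold e; fun_prop
    exact (continuous_const.mul he).add (continuous_const.mul hsum)
  apply intervalIntegral.integral_mono_on zero_le_one
  · exact ((hH.continuousOn.mul hy).intervalIntegrable_of_Icc zero_le_one)
  · exact ((hRHS.continuousOn.mul hy).intervalIntegrable_of_Icc zero_le_one)
  · intro s hs
    apply mul_le_mul_of_nonneg_right _ (hynn s hs)
    unfold H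
    have h1 := G_le_e ht hs
    have h2 := intG_le_e hs
    have hak : 0 ≤ α / k := div_nonneg hα hk0.le
    have h3 := mul_le_mul_of_nonneg_left h2 hak
    nlinarith
end

section
/- Let θ ∈ (0, 1/2), y ∈ C([0,1], [0,∞)), α ≥ 0, βᵢ ≥ 0 with 0 < η₁ < ... < ηₙ < 1 and k := 1 − (α + Σᵢ βᵢ) > 0, and let u(t) = ∫₀¹ H(t,s) y(s) ds. Then for all t ∈ [θ, 1−θ], u(t) ≥ θ³(1−2θ) ∫₀¹ ((1 + α/k) e(s) + (1/k)Σᵢ βᵢ G(ηᵢ,s)) y(s) ds, where e(s) = (1/6)s(1−s)². -/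
open Set intervalIntegral Filter

lemma contG_right (t : ℝ) : Continuous (fun s => G t s) := by
  unfold G
  apply Continuous.if_le (by continuity) (by continuity) continuous_id continuous_const
  intro x hx; simp only [id_eq] at hx; rw [hx]; ring

lemma contG_left (s : ℝ) : Continuous (fun t => G t s) := by
  unfold G
  apply Continuous.if_le (by continuity) (by continuity) continuous_const continuous_id
  intro x hx; simp only [id_eq] at hx; rw [← hx]; ring

lemma cont_e : Continuous e := by unfold e; continuity

lemma G_nonneg {t s : ℝ} (ht0 : 0 ≤ t) (ht1 : t ≤ 1) (hs0 : 0 ≤ s) (hs1 : s ≤ 1) :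
    0 ≤ G t s := by
  unfold G; split_ifs with h
  · have e2 : t - s ≤ t*(1-s) := by nlinarith
    have e4 : 0 ≤ t - s := by linarith
    nlinarith [pow_le_pow_left₀ e4 e2 3,
      mul_nonneg (mul_nonneg (pow_nonneg ht0 3) (sq_nonneg (1-s))) hs0]
  · positivity

set_option maxHeartbeats 2000000 in
lemma G_lower {θ t s : ℝ} (hθ0 : 0 < θ) (hθ1 : θ < 1/2) (ht1 : θ ≤ t) (ht2 : t ≤ 1-θ)
    (hs0 : 0 ≤ s) (hs1 : s ≤ 1) : θ^3*(1-2*θ)*e s ≤ G t s := by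
  have ht0 : 0 < t := lt_of_lt_of_le hθ0 ht1
  have hc1 : θ^3*(1-2*θ) ≤ θ^3 := by nlinarith [pow_pos hθ0 3]
  have hc2 : θ^3 ≤ θ^2 := by nlinarith
  have hc3 : θ^2 ≤ 1 := by nlinarith
  unfold G e; split_ifs with h
  · -- s ≤ t
    rcases le_total s θ with hsθ | hsθ
    · -- s ≤ θ ≤ t
      have e2 : t - s ≤ t*(1-s) := by nlinarith
      have e3 : θ - s ≤ θ*(1-s) := by nlinarith
      have e4 : 0 ≤ t - s := by linarith
      have e5 : 0 ≤ θ - s := by linarith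
      have h1 : (t-s)^2 ≤ t^2*(1-s)^2 := by nlinarith [mul_self_le_mul_self e4 e2]
      have h2 : (θ-s)^2 ≤ θ^2*(1-s)^2 := by nlinarith [mul_self_le_mul_self e5 e3]
      have h3 : (t-s)*(θ-s) ≤ t*θ*(1-s)^2 := by
        nlinarith [mul_le_mul e2 e3 e5 (by nlinarith : (0:ℝ) ≤ t*(1-s))]
      have brk : 0 ≤ (t^2+t*θ+θ^2)*(1-s)^2 - ((t-s)^2+(t-s)*(θ-s)+(θ-s)^2) := by
        linarith
      have mono : θ^3*(1-s)^2 - (θ-s)^3 ≤ t^3*(1-s)^2 - (t-s)^3 := by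
        nlinarith [mul_nonneg (by linarith : (0:ℝ) ≤ t-θ) brk]
      have hBθ : 0 ≤ θ*(1-θ)*((1+θ) - 2*θ^2*(1-2*θ)) := by
        have h8 : (0:ℝ) ≤ (1+θ) - 2*θ^2*(1-2*θ) := by nlinarith
        have h9 : (0:ℝ) ≤ θ*(1-θ) := by nlinarith
        exact mul_nonneg h9 h8
      have hB : 0 ≤ 2*θ - s - θ^3 - θ^3*(1-2*θ)*(2-s-θ) := by
        nlinarith [hBθ, mul_nonneg e5 (by nlinarith : (0:ℝ) ≤ 1 - θ^3*(1-2*θ))]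
      have hqθ : 0 ≤ θ^2*(1-θ)^2*(1-θ+2*θ^2) := by
        have : (0:ℝ) ≤ 1-θ+2*θ^2 := by nlinarith
        positivity
      have hq : 0 ≤ s^2 - 3*θ*s + 3*θ^2 - 2*θ^3 + θ^3*s - θ^3*(1-2*θ)*(1-s)^2 := by
        nlinarith [mul_nonneg e5 hB, hqθ]
      have base : θ^3*(1-2*θ)*(s*(1-s)^2) ≤ θ^3*(1-s)^2 - (θ-s)^3 := by
        nlinarith [mul_nonneg hs0 hq]
      linarith
    · -- θ ≤ s ≤ t
      have e2 : t - s ≤ t*(1-s) := by nlinarith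
      have e4 : 0 ≤ t - s := by linarith
      have h1 : (t-s)^2 ≤ t^2*(1-s)^2 := by nlinarith [mul_self_le_mul_self e4 e2]
      have brk : 0 ≤ (t^2+t*s+s^2)*(1-s)^2 - (t-s)^2 := by
        nlinarith [mul_nonneg (mul_nonneg hs0 ht0.le) (sq_nonneg (1-s)),
          mul_nonneg (mul_nonneg hs0 hs0) (sq_nonneg (1-s))]
      have mono : s^3*(1-s)^2 ≤ t^3*(1-s)^2 - (t-s)^3 := by
        nlinarith [mul_nonneg e4 brk]
      have hcs : θ^3*(1-2*θ) ≤ s^2 := by nlinarith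
      have base : θ^3*(1-2*θ)*(s*(1-s)^2) ≤ s^3*(1-s)^2 := by
        nlinarith [mul_nonneg (mul_nonneg hs0 (sq_nonneg (1-s)))
          (by linarith : (0:ℝ) ≤ s^2 - θ^3*(1-2*θ))]
      linarith
  · -- t < s
    push_neg at h
    have h1 : θ^3 ≤ t^3 := pow_le_pow_left₀ hθ0.le ht1 3
    have hA : θ^3*(1-2*θ)*s ≤ t^3 := by
      nlinarith [pow_pos hθ0 3, mul_nonneg (pow_nonneg hθ0.le 3) (by linarith : (0:ℝ) ≤ 2*θ)]
    have := mul_le_mul_of_nonneg_right hA (sq_nonneg (1-s))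
    linarith

lemma intG {s : ℝ} (hs0 : 0 ≤ s) (hs1 : s ≤ 1) :
    (∫ τ in (0:ℝ)..1, G τ s) = s*(1-s)^2*(2-s)/24 := by
  have hc := contG_left s
  have h1 : (∫ τ in (0:ℝ)..s, G τ s) = s^4*((1-s)^2/6)/4 := by
    rw [intervalIntegral.integral_congr (g := fun τ => τ^3 * ((1-s)^2/6))]
    · rw [intervalIntegral.integral_mul_const, integral_pow]; norm_num; ring
    · intro τ hτ
      rw [uIcc_of_le hs0] at hτ
      simp only [G]
      split_ifs with hst
      · have : τ = s := le_antisymm hτ.2 hst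
        rw [this]; ring
      · ring
  have h2 : (∫ τ in s..(1:ℝ), G τ s) = (1-s^4)*((1-s)^2/6)/4 - (1-s)^4/24 := by
    rw [intervalIntegral.integral_congr (g := fun τ => τ^3 * ((1-s)^2/6) - (τ-s)^3/6)]
    · rw [intervalIntegral.integral_sub (by apply Continuous.intervalIntegrable; continuity)
        (by apply Continuous.intervalIntegrable; continuity)]
      have h3 : (∫ τ in s..(1:ℝ), (τ-s)^3/6) = (1-s)^4/24 := by
        have : (∫ τ in s..(1:ℝ), (τ-s)^3) = (1-s)^4/4 := by
          rw [intervalIntegral.integral_comp_sub_right (fun x => x^3) s, integral_pow]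
          norm_num
        calc (∫ τ in s..(1:ℝ), (τ-s)^3/6) = (∫ τ in s..(1:ℝ), (τ-s)^3) / 6 := by
              rw [← intervalIntegral.integral_div]
          _ = (1-s)^4/24 := by rw [this]; ring
      rw [intervalIntegral.integral_mul_const, integral_pow, h3]
      norm_num; ring
    · intro τ hτ
      rw [uIcc_of_le hs1] at hτ
      simp only [G, if_pos hτ.1]
      ring
  have hi1 : IntervalIntegrable (fun τ => G τ s) MeasureTheory.volume 0 s :=
    hc.intervalIntegrable _ _
  have hi2 : IntervalIntegrable (fun τ => G τ s) MeasureTheory.volume s 1 :=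
    hc.intervalIntegrable _ _
  have hsplit := intervalIntegral.integral_add_adjacent_intervals hi1 hi2
  rw [← hsplit, h1, h2]; ring

set_option maxHeartbeats 2000000 in
theorem stmt8 (θ : ℝ) (hθ : θ ∈ Set.Ioo (0:ℝ) (1/2))
    (n : ℕ) (α : ℝ) (β η : Fin n → ℝ)
    (hα : 0 ≤ α) (hβ : ∀ i, 0 ≤ β i)
    (hηmono : StrictMono η) (hη : ∀ i, η i ∈ Set.Ioo (0:ℝ) 1)
    (k : ℝ) (hk : k = 1 - (α + ∑ i, β i)) (hk0 : 0 < k)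
    (y : ℝ → ℝ) (hy : ContinuousOn y (Set.Icc 0 1))
    (hynn : ∀ t ∈ Set.Icc (0:ℝ) 1, 0 ≤ y t)
    (u : ℝ → ℝ) (hu : ∀ t, u t = ∫ s in (0:ℝ)..1, H α k β η t s * y s) :
    ∀ t ∈ Set.Icc θ (1-θ),
      θ^3 * (1-2*θ) * ∫ s in (0:ℝ)..1,
        ((1 + α/k) * e s + (1/k) * ∑ i, β i * G (η i) s) * y s ≤ u t := by
  obtain ⟨hθ0, hθ1⟩ := hθ
  intro t ht
  obtain ⟨htl, htr⟩ := ht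
  rw [hu t]
  have huicc : uIcc (0:ℝ) 1 = Icc 0 1 := uIcc_of_le (by norm_num)
  have hyI : ContinuousOn y (uIcc (0:ℝ) 1) := huicc ▸ hy
  set S : ℝ → ℝ := fun s => ∑ i, β i * G (η i) s with hS
  have hcontS : Continuous S := by
    apply continuous_finset_sum
    intro i _
    exact continuous_const.mul (contG_right (η i))
  have hEq : EqOn (fun s => H α k β η t s * y s)
      (fun s => (G t s + (α/k) * (s*(1-s)^2*(2-s)/24) + (1/k) * S s) * y s) (uIcc (0:ℝ) 1) := by
    intro s hs
    rw [huicc] at hs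
    simp only [H, hS]
    rw [intG hs.1 hs.2]
  rw [intervalIntegral.integral_congr hEq, ← intervalIntegral.integral_const_mul]
  have hcont1 : Continuous (fun s => (1 + α/k) * e s + (1/k) * S s) :=
    ((continuous_const.mul cont_e).add (continuous_const.mul hcontS))
  have hcont2 : Continuous (fun s : ℝ =>
      G t s + (α/k) * (s*(1-s)^2*(2-s)/24) + (1/k) * S s) := by
    apply Continuous.add
    apply Continuous.add (contG_right t)
    · exact (by continuity : Continuous fun s : ℝ => (α/k) * (s*(1-s)^2*(2-s)/24))
    · exact continuous_const.mul hcontS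
  apply intervalIntegral.integral_mono_on (by norm_num)
  · exact (continuous_const.continuousOn.mul (hcont1.continuousOn.mul hyI)).intervalIntegrable
  · exact (hcont2.continuousOn.mul hyI).intervalIntegrable
  · intro s hs
    have hy0 := hynn s hs
    have hA : θ^3*(1-2*θ)*e s ≤ G t s := G_lower hθ0 hθ1 htl htr hs.1 hs.2
    have hθ3 : θ^3 ≤ 1/8 := by nlinarith [pow_le_pow_left₀ hθ0.le hθ1.le 3]
    have hcc : θ^3*(1-2*θ) ≤ θ^3 := by nlinarith [pow_pos hθ0 3]
    have hc1 : θ^3*(1-2*θ) ≤ 1 := by linarith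
    have hB : θ^3*(1-2*θ)*e s ≤ s*(1-s)^2*(2-s)/24 := by
      unfold e
      nlinarith [mul_nonneg (mul_nonneg hs.1 (sq_nonneg (1-s)))
        (by linarith [hs.2] : (0:ℝ) ≤ 2-s-4*(θ^3*(1-2*θ)))]
    have hSnn : 0 ≤ S s :=
      Finset.sum_nonneg fun i _ =>
        mul_nonneg (hβ i) (G_nonneg (hη i).1.le (hη i).2.le hs.1 hs.2)
    have hαk : 0 ≤ α/k := div_nonneg hα hk0.le
    have hik : (0:ℝ) ≤ 1/k := by positivity
    have t2 := mul_le_mul_of_nonneg_left hB hαk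
    have t3 : θ^3*(1-2*θ) * ((1/k)*S s) ≤ (1/k)*S s := by
      nlinarith [mul_nonneg hik hSnn]
    have key : θ^3*(1-2*θ) * ((1 + α/k)*e s + (1/k)*S s) ≤
        G t s + (α/k) * (s*(1-s)^2*(2-s)/24) + (1/k) * S s := by
      nlinarith [hA, t2, t3]
    have := mul_le_mul_of_nonneg_right key hy0
    nlinarith [this]
end

section
/- The operator T defined by (Tu)(t) = ∫₀¹ H(t,s) f(s, u(s)) ds maps the cone K = {u ∈ C([0,1], ℝ) : u ≥ 0 and min_{t ∈ [θ,1−θ]} u(t) ≥ θ³(1−2θ)‖u‖} into itself, where f ∈ C([0,1] × [0,∞), [0,∞)), θ ∈ (0,1/2), α ≥ 0, βᵢ ≥ 0, 0 < η₁ < ... < ηₙ < 1, and k = 1 − (α + Σᵢ βᵢ) > 0. -/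
open Set intervalIntegral Filter

lemma G_ge {t s : ℝ} (ht : t ∈ Icc (0:ℝ) 1) (hs : s ∈ Icc (0:ℝ) 1) :
    t^3 * e s ≤ G t s := by
  obtain ⟨ht0, ht1⟩ := ht; obtain ⟨hs0, hs1⟩ := hs
  unfold G e
  split_ifs with h
  · have h1 : (t - s) ≤ t * (1 - s) := by nlinarith
    have h2 : (t - s)^3 ≤ (t * (1 - s))^3 := by
      have := pow_le_pow_left₀ (by linarith) h1 3
      linarith [this]
    nlinarith [h2]
  · nlinarith [mul_nonneg (mul_nonneg (pow_nonneg ht0 3) (sq_nonneg (1-s)))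
      (sub_nonneg.2 hs1)]

lemma G_le {t s : ℝ} (ht : t ∈ Icc (0:ℝ) 1) (hs : s ∈ Icc (0:ℝ) 1) :
    G t s ≤ e s := by
  obtain ⟨ht0, ht1⟩ := ht; obtain ⟨hs0, hs1⟩ := hs
  unfold G e
  split_ifs with h
  · have hin : 0 ≤ 1 + t - 2*t^2 - 2*s + s*t + s*t^2 := by
      nlinarith [mul_nonneg (mul_nonneg (sub_nonneg.2 ht1) (sub_nonneg.2 ht1))
          (by linarith : (0:ℝ) ≤ 1 + t),
        mul_nonneg (sub_nonneg.2 h)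
          (mul_nonneg (sub_nonneg.2 ht1) (by linarith : (0:ℝ) ≤ 2 + t))]
    nlinarith [mul_nonneg (mul_nonneg hs0 (sub_nonneg.2 ht1)) hin]
  · have h3 : t^3 ≤ s := by nlinarith [mul_nonneg (mul_nonneg ht0 (sub_nonneg.2 ht1)) (by linarith : (0:ℝ) ≤ 1 + t)]
    nlinarith [mul_nonneg (sub_nonneg.2 h3) (sq_nonneg (1-s))]

lemma e_nonneg {s : ℝ} (hs : s ∈ Icc (0:ℝ) 1) : 0 ≤ e s := by
  have := mul_nonneg hs.1 (sq_nonneg (1-s))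
  unfold e; linarith

lemma G_nonneg_s18 {t s : ℝ} (ht : t ∈ Icc (0:ℝ) 1) (hs : s ∈ Icc (0:ℝ) 1) :
    0 ≤ G t s :=
  le_trans (mul_nonneg (pow_nonneg ht.1 3) (e_nonneg hs)) (G_ge ht hs)

lemma intG_cont : Continuous fun s : ℝ => ∫ τ in (0:ℝ)..1, G τ s := by
  apply intervalIntegral.continuous_parametric_intervalIntegral_of_continuous'
    (f := fun s τ => G τ s)
  exact G_cont.comp (continuous_snd.prodMk continuous_fst)

lemma intG_nonneg {s : ℝ} (hs : s ∈ Icc (0:ℝ) 1) :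
    0 ≤ ∫ τ in (0:ℝ)..1, G τ s :=
  intervalIntegral.integral_nonneg zero_le_one fun τ hτ => G_nonneg_s18 hτ hs

lemma H_cont (α k : ℝ) {n : ℕ} (β η : Fin n → ℝ) :
    Continuous fun p : ℝ × ℝ => H α k β η p.1 p.2 := by
  unfold H
  refine (G_cont.add ?_).add ?_
  · exact continuous_const.mul (intG_cont.comp continuous_snd)
  · refine continuous_const.mul (continuous_finset_sum _ fun i _ => ?_)
    exact continuous_const.mul ((G_cont.comp
      ((continuous_const : Continuous fun _ : ℝ × ℝ => η i).prodMk continuous_snd)))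

lemma H_decomp (α k : ℝ) {n : ℕ} (β η : Fin n → ℝ) (t s : ℝ) :
    H α k β η t s = G t s +
      ((α/k) * (∫ τ in (0:ℝ)..1, G τ s) + (1/k) * ∑ i, β i * G (η i) s) := by
  unfold H; ring

theorem stmt18 (θ : ℝ) (hθ : θ ∈ Set.Ioo (0:ℝ) (1/2))
    (n : ℕ) (α : ℝ) (β η : Fin n → ℝ)
    (hα : 0 ≤ α) (hβ : ∀ i, 0 ≤ β i)
    (hηmono : StrictMono η) (hη : ∀ i, η i ∈ Set.Ioo (0:ℝ) 1)
    (k : ℝ) (hk : k = 1 - (α + ∑ i, β i)) (hk0 : 0 < k)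
    (f : ℝ → ℝ → ℝ)
    (hf : ContinuousOn (fun p : ℝ × ℝ => f p.1 p.2) (Set.Icc 0 1 ×ˢ Set.Ici 0))
    (hfnn : ∀ t ∈ Set.Icc (0:ℝ) 1, ∀ x ∈ Set.Ici (0:ℝ), 0 ≤ f t x)
    (u : ℝ → ℝ) (hucont : ContinuousOn u (Set.Icc 0 1))
    (hunn : ∀ t ∈ Set.Icc (0:ℝ) 1, 0 ≤ u t)
    (hucone : ∀ t ∈ Set.Icc θ (1-θ),
      θ^3 * (1-2*θ) * sSup ((fun t => |u t|) '' Set.Icc (0:ℝ) 1) ≤ u t) :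
    ContinuousOn (fun t => ∫ s in (0:ℝ)..1, H α k β η t s * f s (u s)) (Set.Icc 0 1) ∧
    (∀ t ∈ Set.Icc (0:ℝ) 1, 0 ≤ ∫ s in (0:ℝ)..1, H α k β η t s * f s (u s)) ∧
    (∀ t ∈ Set.Icc θ (1-θ),
      θ^3 * (1-2*θ) *
        sSup ((fun t => |∫ s in (0:ℝ)..1, H α k β η t s * f s (u s)|) '' Set.Icc (0:ℝ) 1)
        ≤ ∫ s in (0:ℝ)..1, H α k β η t s * f s (u s)) := by
  obtain ⟨hθ0, hθ2⟩ := hθ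
  -- the projection onto [0,1]
  set π : ℝ → ℝ := fun s => max 0 (min 1 s) with hπ
  have hπmem : ∀ s, π s ∈ Icc (0:ℝ) 1 := fun s =>
    ⟨le_max_left _ _, max_le zero_le_one (min_le_left _ _)⟩
  have hπcont : Continuous π := continuous_const.max (continuous_const.min continuous_id)
  have hπid : ∀ s ∈ Icc (0:ℝ) 1, π s = s := by
    intro s hs
    simp [hπ, min_eq_right hs.2, max_eq_right (le_min zero_le_one hs.1), hs.1]
  set g : ℝ → ℝ := fun s => f (π s) (u (π s)) with hg
  have hgcont : Continuous g := by
    apply hf.comp_continuous (hπcont.prodMk (hucont.comp_continuous hπcont hπmem))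
    exact fun s => ⟨hπmem s, hunn _ (hπmem s)⟩
  have hgnn : ∀ s, 0 ≤ g s := fun s => hfnn _ (hπmem s) _ (hunn _ (hπmem s))
  have hgeq : ∀ s ∈ Icc (0:ℝ) 1, g s = f s (u s) := by
    intro s hs; simp only [hg, hπid s hs]
  -- replace f s (u s) by g s in the integrals
  set T : ℝ → ℝ := fun t => ∫ s in (0:ℝ)..1, H α k β η t s * g s with hT
  have hTeq : ∀ t, (∫ s in (0:ℝ)..1, H α k β η t s * f s (u s)) = T t := by
    intro t
    apply intervalIntegral.integral_congr
    intro s hs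
    rw [Set.uIcc_of_le zero_le_one] at hs
    show H α k β η t s * f s (u s) = H α k β η t s * g s
    rw [hgeq s hs]
  have hTcont : Continuous T := by
    apply intervalIntegral.continuous_parametric_intervalIntegral_of_continuous'
      (f := fun t s => H α k β η t s * g s)
    exact (H_cont α k β η).mul (hgcont.comp continuous_snd)
  -- nonnegativity of H on the square
  have hHnn : ∀ t ∈ Icc (0:ℝ) 1, ∀ s ∈ Icc (0:ℝ) 1, 0 ≤ H α k β η t s := by
    intro t ht s hs
    rw [H_decomp]
    have h1 : 0 ≤ (α/k) * (∫ τ in (0:ℝ)..1, G τ s) :=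
      mul_nonneg (div_nonneg hα hk0.le) (intG_nonneg hs)
    have h2 : 0 ≤ (1/k) * ∑ i, β i * G (η i) s := by
      refine mul_nonneg (by positivity) (Finset.sum_nonneg fun i _ => ?_)
      exact mul_nonneg (hβ i) (G_nonneg_s18 ⟨(hη i).1.le, (hη i).2.le⟩ hs)
    have := G_nonneg_s18 ht hs
    linarith
  have hintg : ∀ t : ℝ, Continuous fun s => H α k β η t s * g s := fun t =>
    ((H_cont α k β η).comp (continuous_const.prodMk continuous_id)).mul hgcont
  have hTnn : ∀ t ∈ Icc (0:ℝ) 1, 0 ≤ T t := by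
    intro t ht
    exact intervalIntegral.integral_nonneg zero_le_one fun s hs =>
      mul_nonneg (hHnn t ht s hs) (hgnn s)
  refine ⟨?_, ?_, ?_⟩
  · exact (funext hTeq : _) ▸ hTcont.continuousOn
  · intro t ht; rw [hTeq t]; exact hTnn t ht
  intro t ht
  rw [hTeq t]
  have habs : (fun t => |∫ s in (0:ℝ)..1, H α k β η t s * f s (u s)|)
      = fun t => |T t| := funext fun t => by rw [hTeq t]
  rw [habs]
  have hsub : Icc θ (1-θ) ⊆ Icc (0:ℝ) 1 := Icc_subset_Icc hθ0.le (by linarith)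
  have ht01 : t ∈ Icc (0:ℝ) 1 := hsub ht
  set c : ℝ := θ^3 * (1-2*θ) with hc
  have hc0 : 0 < c := by
    apply mul_pos (by positivity); linarith
  have hc1 : c ≤ 1 := by nlinarith [pow_le_pow_left₀ hθ0.le (by linarith : θ ≤ 1) 3]
  -- key pointwise estimate
  have hkey : ∀ t' ∈ Icc (0:ℝ) 1, ∀ s ∈ Icc (0:ℝ) 1,
      c * H α k β η t' s ≤ H α k β η t s := by
    intro t' ht' s hs
    rw [H_decomp, H_decomp]
    have h1 : 0 ≤ (α/k) * (∫ τ in (0:ℝ)..1, G τ s) :=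
      mul_nonneg (div_nonneg hα hk0.le) (intG_nonneg hs)
    have h2 : 0 ≤ (1/k) * ∑ i, β i * G (η i) s := by
      refine mul_nonneg (by positivity) (Finset.sum_nonneg fun i _ => ?_)
      exact mul_nonneg (hβ i) (G_nonneg_s18 ⟨(hη i).1.le, (hη i).2.le⟩ hs)
    have hCnn : 0 ≤ (α/k) * (∫ τ in (0:ℝ)..1, G τ s)
        + (1/k) * ∑ i, β i * G (η i) s := by linarith
    have h3 : c * G t' s ≤ G t s := by
      have hGle : G t' s ≤ e s := G_le ht' hs
      have hGge : t^3 * e s ≤ G t s := G_ge ht01 hs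
      have hθt : θ^3 ≤ t^3 := pow_le_pow_left₀ hθ0.le ht.1 3
      have hes : 0 ≤ e s := e_nonneg hs
      have hcθ : c ≤ θ^3 := by nlinarith
      calc c * G t' s ≤ c * e s := by
            apply mul_le_mul_of_nonneg_left hGle hc0.le
        _ ≤ t^3 * e s := by nlinarith
        _ ≤ G t s := hGge
    nlinarith
  -- integrate the pointwise estimate
  have hint : ∀ t' ∈ Icc (0:ℝ) 1, c * T t' ≤ T t := by
    intro t' ht'
    rw [hT, ← intervalIntegral.integral_const_mul]
    apply intervalIntegral.integral_mono_on zero_le_one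
    · exact (continuous_const.mul (hintg t')).intervalIntegrable _ _
    · exact (hintg t).intervalIntegrable _ _
    · intro s hs
      calc c * (H α k β η t' s * g s) = (c * H α k β η t' s) * g s := by ring
        _ ≤ H α k β η t s * g s :=
          mul_le_mul_of_nonneg_right (hkey t' ht' s hs) (hgnn s)
  rw [mul_comm, ← le_div_iff₀ hc0]
  apply csSup_le
  · exact (Set.Nonempty.image _ ⟨0, left_mem_Icc.2 zero_le_one⟩)
  · rintro v ⟨t', ht', rfl⟩
    rw [le_div_iff₀ hc0]
    show |T t'| * c ≤ T t
    rw [abs_of_nonneg (hTnn t' ht'), mul_comm]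
    exact hint t' ht'
end
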